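/- Suppose the training set contains exactly c copies of a sample (x, ỹ), let h = xᵀN⁻¹x and r = xᵀθ̂ − ỹ, and assume 0 < h < min(1, 1/c). For any x_test ∈ ℝ^d, let A_{-{i}} = x_testᵀN⁻¹x·r/(1−h) be the actual effect of removing a single copy and A_{-{i}^c} = c·x_testᵀN⁻¹x·r/(1−c·h) the actual effect of removing all c copies. Then A_{-{i}^c} = [c(1−h)/(1−c·h)]·A_{-{i}}, and if c ≥ 2 then c(1−h)/(1−c·h) > c; in particular, if additionally A_{-{i}} > 0 then A_{-{i}^c} > c·A_{-{i}}. -/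

import Mathlib

open Matrix Finset

noncomputable section

/-- The Gram matrix `X₋ₛᵀ X₋ₛ` of the rows of `X` outside `S`. -/
def gramOut {n d : ℕ} (X : Matrix (Fin n) (Fin d) ℝ) (S : Finset (Fin n)) :
    Matrix (Fin d) (Fin d) ℝ :=
  ∑ i ∈ Sᶜ, vecMulVec (X i) (X i)

/-- The leave-`S`-out OLS estimator `θ̂₋ₛ = (X₋ₛᵀX₋ₛ)⁻¹ X₋ₛᵀ y₋ₛ`. -/
def olsOut {n d : ℕ} (X : Matrix (Fin n) (Fin d) ℝ) (y : Fin n → ℝ)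
    (S : Finset (Fin n)) : Fin d → ℝ :=
  (gramOut X S)⁻¹ *ᵥ (∑ i ∈ Sᶜ, y i • X i)

/-- The full OLS estimator `θ̂ = (XᵀX)⁻¹ Xᵀ y`. -/
def ols {n d : ℕ} (X : Matrix (Fin n) (Fin d) ℝ) (y : Fin n → ℝ) : Fin d → ℝ :=
  olsOut X y ∅

/-- The actual effect `A₋ₛ = x_testᵀ (θ̂₋ₛ - θ̂)` of removing the samples in `S`. -/
def effect {n d : ℕ} (X : Matrix (Fin n) (Fin d) ℝ) (y : Fin n → ℝ)
    (xt : Fin d → ℝ) (S : Finset (Fin n)) : ℝ :=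
  xt ⬝ᵥ (olsOut X y S - ols X y)

/-- The (cross-)leverage score `hᵢⱼ = xᵢᵀ N⁻¹ xⱼ` with `N = XᵀX`. -/
def lev {n d : ℕ} (X : Matrix (Fin n) (Fin d) ℝ) (i j : Fin n) : ℝ :=
  X i ⬝ᵥ ((Xᵀ * X)⁻¹ *ᵥ X j)

/-- The negative residual `rᵢ = xᵢᵀ θ̂ - yᵢ`. -/
def resid {n d : ℕ} (X : Matrix (Fin n) (Fin d) ℝ) (y : Fin n → ℝ) (i : Fin n) : ℝ :=
  X i ⬝ᵥ ols X y - y i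

/-- The generated labels `y = Xθ* - e`, `e = (ε,0,…,0,pε)ᵀ` (with the index `i₁`
playing the role of sample 1 and `iₙ` that of sample n). -/
def ygen {n d : ℕ} (X : Matrix (Fin n) (Fin d) ℝ) (θstar : Fin d → ℝ) (ε p : ℝ)
    (i₁ iₙ : Fin n) : Fin n → ℝ :=
  fun i => X i ⬝ᵥ θstar - (if i = i₁ then ε else if i = iₙ then p * ε else 0)

/-- The test point `x_test = (x₁ + p xₙ)/(p+1)`. -/
def xtest {n d : ℕ} (X : Matrix (Fin n) (Fin d) ℝ) (p : ℝ) (i₁ iₙ : Fin n) :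
    Fin d → ℝ :=
  fun j => (X i₁ j + p * X iₙ j) / (p + 1)

open Classical in
/-- Proposition 3.4, amplification: with exactly `c` copies of the
sample `(x, ỹ)` in the training set, `h = xᵀN⁻¹x`, `r = xᵀθ̂ - ỹ`, `0 < h < min(1, 1/c)`,
and with `A₋{i} = x_testᵀN⁻¹x·r/(1-h)` (effect of removing one copy) and
`A₋{i}ᶜ = c·x_testᵀN⁻¹x·r/(1-c·h)` (effect of removing all `c` copies), we have
`A₋{i}ᶜ = [c(1-h)/(1-c·h)]·A₋{i}`; if `c ≥ 2` then `c(1-h)/(1-c·h) > c`; and in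
particular if additionally `A₋{i} > 0` then `A₋{i}ᶜ > c·A₋{i}`. -/
theorem amplification_ratio
    (n d c : ℕ) (hc : 1 ≤ c)
    (X : Matrix (Fin n) (Fin d) ℝ) (y : Fin n → ℝ)
    (x : Fin d → ℝ) (ytil : ℝ)
    -- the training set contains exactly `c` copies of `(x, ỹ)`
    (hcopies : ({i : Fin n | X i = x ∧ y i = ytil} : Finset (Fin n)).card = c)
    (hN : IsUnit (Xᵀ * X).det)
    (h r : ℝ)
    (hh : h = x ⬝ᵥ ((Xᵀ * X)⁻¹ *ᵥ x))
    (hr : r = x ⬝ᵥ ols X y - ytil)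
    (hpos : 0 < h) (h1 : h < 1) (hinvc : h < 1 / (c : ℝ))
    (xt : Fin d → ℝ) (A Ac : ℝ)
    (hA : A = (xt ⬝ᵥ ((Xᵀ * X)⁻¹ *ᵥ x)) * r / (1 - h))
    (hAc : Ac = (c : ℝ) * (xt ⬝ᵥ ((Xᵀ * X)⁻¹ *ᵥ x)) * r / (1 - (c : ℝ) * h)) :
    Ac = ((c : ℝ) * (1 - h) / (1 - (c : ℝ) * h)) * A ∧
    (2 ≤ c → (c : ℝ) < (c : ℝ) * (1 - h) / (1 - (c : ℝ) * h)) ∧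
    (2 ≤ c → 0 < A → (c : ℝ) * A < Ac) := by
  have hcpos : (0:ℝ) < c := by exact_mod_cast hc
  have hch : (c:ℝ) * h < 1 := by
    have := (lt_div_iff₀ hcpos).mp hinvc
    linarith [this]
  have h1c : (0:ℝ) < 1 - (c:ℝ) * h := by linarith
  have h1h : (0:ℝ) < 1 - h := by linarith
  have hratio : Ac = ((c : ℝ) * (1 - h) / (1 - (c : ℝ) * h)) * A := by
    rw [hA, hAc]; field_simp
  refine ⟨hratio, ?_, ?_⟩
  · intro h2
    have h2' : (2:ℝ) ≤ (c:ℝ) := by exact_mod_cast h2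
    rw [lt_div_iff₀ h1c]
    nlinarith [mul_lt_mul_of_pos_right (show (c:ℝ) < (c:ℝ)*(c:ℝ) by nlinarith) hpos]
  · intro h2 hApos
    have h2' : (2:ℝ) ≤ (c:ℝ) := by exact_mod_cast h2
    have this : (c : ℝ) < (c : ℝ) * (1 - h) / (1 - (c : ℝ) * h) := by
      rw [lt_div_iff₀ h1c]
      nlinarith [mul_lt_mul_of_pos_right (show (c:ℝ) < (c:ℝ)*(c:ℝ) by nlinarith) hpos]
    rw [hratio]
    exact mul_lt_mul_of_pos_right this hApos
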